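/- The maximizer over w ≥ 0 of the likelihood f(r | q, μ_g(w); w), where r = μ_g(w)·q + n with n ~ CN(0, σ_n² I) and μ_g(w) = (√c/(1+(1+w²)c))·ζ/√M, is ŵ = √( [ ζ / ((r†q/(q†q))·√(cM)) − (1 + 1/c) ]⁺ ), where [x]⁺ = max{0, x}. -/

import Mathlib

open MeasureTheory ProbabilityTheory Filter

noncomputable instance (M : ℕ) : MeasureSpace (EuclideanSpace ℂ (Fin M)) :=
  { toMeasurableSpace := inferInstance
    volume := Measure.map (WithLp.toLp 2) (volume : Measure (Fin M → ℂ)) }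
instance (M : ℕ) : BorelSpace (EuclideanSpace ℂ (Fin M)) :=
  inferInstance
instance (M : ℕ) : PolishSpace (EuclideanSpace ℂ (Fin M)) :=
  inferInstance

/-- The circularly-symmetric complex Gaussian distribution `CN(μ, v)` on `ℂ`,
given by the density `z ↦ (π v)⁻¹ exp(-|z-μ|²/v)` w.r.t. Lebesgue measure. -/
noncomputable def cn (μ : ℂ) (v : ℝ) : Measure ℂ :=
  volume.withDensity fun z =>
    ENNReal.ofReal ((Real.pi * v)⁻¹ * Real.exp (-‖z - μ‖ ^ 2 / v))

/-- The circularly-symmetric complex Gaussian distribution `CN(μ, v • I_M)` on `ℂ^M`. -/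
noncomputable def cnVec (M : ℕ) (μ : EuclideanSpace ℂ (Fin M)) (v : ℝ) :
    Measure (EuclideanSpace ℂ (Fin M)) :=
  volume.withDensity fun x =>
    ENNReal.ofReal (((Real.pi * v) ^ M)⁻¹ * Real.exp (-‖x - μ‖ ^ 2 / v))

set_option maxHeartbeats 1000000 in
private lemma pca_quadratic_key (c ζ m A ρ : ℝ) (hc : 0 < c) (hζ : 0 < ζ)
    (hm : 0 < m) (hA : 0 < A) (hρ : 0 < ρ)
    (μg : ℝ → ℝ)
    (hμg : μg = fun w => Real.sqrt c / (1 + (1 + w ^ 2) * c) * (ζ / Real.sqrt m))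
    (what : ℝ)
    (hwhat : what = Real.sqrt
      (max 0 (ζ / ((ρ / A) * Real.sqrt (c * m)) - (1 + 1 / c)))) :
    ∀ w : ℝ, 0 ≤ w →
      A * (μg what)^2 - 2*ρ*(μg what) ≤ A * (μg w)^2 - 2*ρ*(μg w) := by
  have hsc : (0:ℝ) < Real.sqrt c := Real.sqrt_pos.mpr hc
  have hsm : (0:ℝ) < Real.sqrt m := Real.sqrt_pos.mpr hm
  have hscc : Real.sqrt c * Real.sqrt c = c := Real.mul_self_sqrt hc.le
  have hsmm : Real.sqrt m * Real.sqrt m = m := Real.mul_self_sqrt hm.le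
  have hS : Real.sqrt (c * m) = Real.sqrt c * Real.sqrt m := Real.sqrt_mul hc.le m
  have hden : ∀ w : ℝ, 0 < 1 + (1 + w ^ 2) * c := by
    intro w; nlinarith [sq_nonneg w]
  intro w hw0
  have hμgw : μg w = Real.sqrt c / (1 + (1 + w ^ 2) * c) * (ζ / Real.sqrt m) := by
    rw [hμg]
  have hμgwpos : 0 < μg w := by
    rw [hμgw]; have := hden w; positivity
  have hμg0 : μg 0 = Real.sqrt c / (1 + c) * (ζ / Real.sqrt m) := by
    rw [hμg]; norm_num
  have hmono : μg w ≤ μg 0 := by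
    rw [hμgw, hμg0]
    have h1 : (0:ℝ) < 1 + c := by linarith
    have h2 := hden w
    have hζm : 0 < ζ / Real.sqrt m := by positivity
    have : Real.sqrt c / (1 + (1 + w ^ 2) * c) ≤ Real.sqrt c / (1 + c) := by
      apply div_le_div_of_nonneg_left hsc.le h1
      nlinarith [sq_nonneg w]
    nlinarith
  have hfrac : 0 < (ρ / A) * Real.sqrt (c * m) := by rw [hS]; positivity
  rcases le_or_gt (ζ / ((ρ / A) * Real.sqrt (c * m)) - (1 + 1 / c)) 0 with hK0 | hK0
  · -- boundary case: ŵ = 0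
    have hwhat0 : what = 0 := by
      rw [hwhat, max_eq_left hK0, Real.sqrt_zero]
    rw [hwhat0]
    have hzle : ζ ≤ (1 + 1/c) * ((ρ / A) * Real.sqrt (c * m)) := by
      have h1 : ζ / ((ρ / A) * Real.sqrt (c * m)) ≤ 1 + 1/c := by linarith
      calc ζ = ζ / ((ρ / A) * Real.sqrt (c * m)) * ((ρ / A) * Real.sqrt (c * m)) := by
              field_simp
        _ ≤ (1 + 1/c) * ((ρ / A) * Real.sqrt (c * m)) :=
              mul_le_mul_of_nonneg_right h1 hfrac.le
    have hstar : μg 0 ≤ ρ / A := by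
      rw [hμg0, hS] at *
      have h2 : Real.sqrt c * ζ ≤ (1 + 1/c) * (ρ / A * (Real.sqrt c * Real.sqrt m)) * Real.sqrt c :=
        by nlinarith
      have h3 : (1 + 1/c) * (ρ / A * (Real.sqrt c * Real.sqrt m)) * Real.sqrt c
          = (1 + c) * (ρ / A) * Real.sqrt m := by
        field_simp
        linear_combination (c+1) * hscc
      rw [h3] at h2
      rw [div_mul_div_comm, div_le_div_iff₀ (by positivity) hA]
      have h5 := mul_le_mul_of_nonneg_right h2 hA.le
      have h6 : (1+c)*(ρ/A)*Real.sqrt m*A = ρ*((1+c)*Real.sqrt m) := by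
        field_simp
      linarith
    have hAs : A * μg 0 ≤ ρ := by
      have := mul_le_mul_of_nonneg_left hstar hA.le
      have h4 : A * (ρ / A) = ρ := by field_simp
      linarith [h4 ▸ this]
    have hAw : A * μg w ≤ A * μg 0 := mul_le_mul_of_nonneg_left hmono hA.le
    nlinarith [mul_nonneg (sub_nonneg.mpr hmono) (by linarith : (0:ℝ) ≤ 2*ρ - A*(μg w + μg 0))]
  · -- interior case: μg ŵ = ρ/A
    have hwhat2 : what ^ 2 = ζ / ((ρ / A) * Real.sqrt (c * m)) - (1 + 1 / c) := by
      rw [hwhat, max_eq_right hK0.le, Real.sq_sqrt hK0.le]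
    have hμgwhat : μg what = ρ / A := by
      rw [hμg]
      simp only
      rw [hwhat2]
      have hrA : 0 < ρ / A := by positivity
      have hdenval : 1 + (1 + (ζ / ((ρ / A) * Real.sqrt (c * m)) - (1 + 1 / c))) * c
          = ζ * c / ((ρ / A) * Real.sqrt (c * m)) := by
        field_simp; ring
      rw [hdenval, hS]
      field_simp
      linear_combination hscc
    rw [hμgwhat]
    have e1 : A * (ρ/A)^2 - 2*ρ*(ρ/A) = -(ρ^2) / A := by field_simp; ring
    rw [e1, div_le_iff₀ hA]
    obtain ⟨t, ht⟩ : ∃ t, μg w = t := ⟨_, rfl⟩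
    rw [ht]
    linarith [sq_nonneg (A * t - ρ)]

/-- closed-form approximate ML estimator of the PCA strength.
For the large-`M` Gaussian likelihood `w ↦ exp(−‖r − μ_g(w) q‖²/σ_n²)` with
`μ_g(w) = (√c/(1+(1+w²)c)) ζ/√M`, assuming `r†q > 0` (real), the maximizer over
`w ≥ 0` is `ŵ = √([ζ/((r†q/q†q)√(cM)) − (1+1/c)]⁺)`. -/
theorem ml_estimator_of_pca_strength
    (M Nd : ℕ) (hM : 1 ≤ M) (c ζ vn : ℝ) (hc : 0 < c) (hζ : 0 < ζ) (hvn : 0 < vn)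
    (q r : EuclideanSpace ℂ (Fin Nd)) (hq : q ≠ 0)
    (ρ : ℝ) (hρ : 0 < ρ) (hrq : (inner ℂ r q : ℂ) = (ρ : ℝ))
    (μg : ℝ → ℝ)
    (hμg : μg = fun w => Real.sqrt c / (1 + (1 + w ^ 2) * c) * (ζ / Real.sqrt M))
    (what : ℝ)
    (hwhat : what = Real.sqrt
      (max 0 (ζ / ((ρ / ‖q‖ ^ 2) * Real.sqrt (c * M)) - (1 + 1 / c)))) :
    IsMaxOn (fun w : ℝ => Real.exp (-‖r - ((μg w : ℝ) : ℂ) • q‖ ^ 2 / vn))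
      (Set.Ici 0) what := by
  have hq' : 0 < ‖q‖ := norm_pos_iff.mpr hq
  have hA : (0:ℝ) < ‖q‖ ^ 2 := by positivity
  have hMpos : (0:ℝ) < (M:ℝ) := by exact_mod_cast hM
  have expand : ∀ t : ℝ, ‖r - ((t:ℝ):ℂ) • q‖^2 = ‖r‖^2 - 2*(t*ρ) + t^2*‖q‖^2 := by
    intro t
    rw [@norm_sub_sq ℂ, inner_smul_right, hrq]
    simp [norm_smul]
    rw [mul_pow, sq_abs]
  have key := pca_quadratic_key c ζ (M:ℝ) (‖q‖^2) ρ hc hζ hMpos hA hρ μg hμg what hwhat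
  intro w hw
  simp only [Set.mem_setOf_eq]
  rw [Real.exp_le_exp, div_le_div_iff_of_pos_right hvn, neg_le_neg_iff, expand, expand]
  have := key w hw
  linarith
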